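/- Let X be a quasi-symmetric representation of a reductive group G with maximal torus T and T-weights β_1,...,β_d. For any centrally symmetric polytope F-duality on δ + (1/2)Σ, the sum β_{F*}^+ over the weights positive against supporting normals of the dual face F* equals the negative of β_F^+, i.e., β_{F*}^+ = −β_F^+. -/

import Mathlib

open scoped RealInnerProductSpace Pointwise
open Classical

noncomputable section

variable {V : Type} [NormedAddCommGroup V] [InnerProductSpace ℝ V]

/-- The exposed face of the convex body `P` on which the linear functional `⟪lam, ·⟫`
attains its minimum; `lam` is the unit normal of the corresponding supporting hyperplane,
oriented (as in the paper) towards the half-space containing `P`. -/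
def minFace (P : Set V) (lam : V) : Set V :=
  {x | x ∈ P ∧ ∀ y ∈ P, ⟪lam, x⟫ ≤ ⟪lam, y⟫}

/-- Codimension of a subset of `V`: the codimension of the direction of its affine span. -/
def setCodim (F : Set V) : ℕ :=
  Module.finrank ℝ V - Module.finrank ℝ (affineSpan ℝ F).direction

/-- `𝓛_F`: the set of unit normals `λ_B` of supporting hyperplanes `B` of `P` such that
`B ∩ P` is a facet (codimension-one face) of `P` containing `F`. -/
def faceNormals (P F : Set V) : Set V :=
  {lam | ‖lam‖ = 1 ∧ setCodim (minFace P lam) = 1 ∧ F ⊆ minFace P lam}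

/-- `𝒲_F^+`: indices of the weights pairing strictly positively with some `λ ∈ 𝓛_F`. -/
def WplusIdx {d : ℕ} (β : Fin d → V) (P F : Set V) : Finset (Fin d) :=
  Finset.univ.filter fun i => ∃ lam ∈ faceNormals P F, 0 < ⟪β i, lam⟫

/-- `β_F^+ = Σ_{β_i ∈ 𝒲_F^+} β_i`. -/
def betaPlus {d : ℕ} (β : Fin d → V) (P F : Set V) : V :=
  ∑ i ∈ WplusIdx β P F, β i

/-- The polytope `Σ = { Σ a_i β_i : a_i ∈ [0,1] }`. -/
def SigmaPoly {d : ℕ} (β : Fin d → V) : Set V :=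
  {x | ∃ a : Fin d → ℝ, (∀ i, a i ∈ Set.Icc (0 : ℝ) 1) ∧ x = ∑ i, a i • β i}

/-- The polytope `δ + (1/2)Σ`. -/
def halfSigma {d : ℕ} (β : Fin d → V) (δ : V) : Set V :=
  {x | ∃ a : Fin d → ℝ, (∀ i, a i ∈ Set.Icc (0 : ℝ) 1) ∧
    x = δ + (2⁻¹ : ℝ) • ∑ i, a i • β i}

/-- Quasi-symmetry: for every one-dimensional subspace `L ⊆ M_ℝ`, the sum of the weights
lying on `L` vanishes. -/
def QuasiSymmetric {d : ℕ} (β : Fin d → V) : Prop :=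
  ∀ L : Submodule ℝ V, Module.finrank ℝ L = 1 →
    ∑ i ∈ Finset.univ.filter (fun i => β i ∈ L), β i = 0

/-- `F` is a (proper, nonempty, exposed) face of the convex body `P`. -/
def IsFaceOf (P F : Set V) : Prop :=
  IsExposed ℝ P F ∧ F.Nonempty ∧ F ≠ P

/-- The point dual of `x` with respect to the centrally symmetric polytope with center `c`. -/
def dualPt (c x : V) : V := (2 : ℝ) • c - x

/-- The dual face `F* = -F + 2c` with respect to the center `c`. -/
def dualFace (c : V) (F : Set V) : Set V := dualPt c '' F

/-- For a quasi-symmetric representation with weights `β_1, …, β_d` and a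
face `F` of the centrally symmetric polytope `δ + (1/2)Σ` (whose center is `δ`), the weight
sum attached to the dual face satisfies `β_{F*}^+ = -β_F^+`. -/
lemma sum_closed_zero {d : ℕ} {β : Fin d → V} (hqs : QuasiSymmetric β) :
    ∀ n (T : Finset (Fin d)), T.card = n →
    (∀ i ∈ T, ∀ j, β j ≠ 0 → β j ∈ Submodule.span ℝ {β i} → j ∈ T) →
    ∑ i ∈ T, β i = 0 := by
  intro n
  induction n using Nat.strong_induction_on with
  | _ n ih =>
    intro T hcard hT
    by_cases hz : ∀ i ∈ T, β i = 0
    · exact Finset.sum_eq_zero hz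
    push_neg at hz
    obtain ⟨i0, hi0T, hi0⟩ := hz
    set L := Submodule.span ℝ {β i0} with hLdef
    have hL : Module.finrank ℝ L = 1 := finrank_span_singleton hi0
    have hT1 : ∑ j ∈ T.filter (fun j => β j ∈ L), β j
        = ∑ j ∈ Finset.univ.filter (fun j => β j ∈ L), β j := by
      apply Finset.sum_subset
      · exact fun j hj => Finset.mem_filter.2 ⟨Finset.mem_univ _, (Finset.mem_filter.1 hj).2⟩
      · intro j hj hjn
        by_contra hne
        exact hjn (Finset.mem_filter.2
          ⟨hT i0 hi0T j hne (Finset.mem_filter.1 hj).2, (Finset.mem_filter.1 hj).2⟩)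
    have hsplit : ∑ i ∈ T, β i
        = ∑ j ∈ T.filter (fun j => β j ∈ L), β j
          + ∑ j ∈ T.filter (fun j => ¬ (β j ∈ L)), β j :=
      (Finset.sum_filter_add_sum_filter_not T _ _).symm
    rw [hsplit, hT1, hqs L hL, zero_add]
    refine ih (T.filter (fun j => ¬ (β j ∈ L))).card ?_ _ rfl ?_
    · rw [← hcard]
      refine Finset.card_lt_card (Finset.filter_ssubset.2 ⟨i0, hi0T, ?_⟩)
      simp only [not_not]
      exact Submodule.mem_span_singleton_self _
    · intro i hi j hj0 hjspan
      obtain ⟨hiT, hiL⟩ := Finset.mem_filter.1 hi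
      have hjT : j ∈ T := hT i hiT j hj0 hjspan
      refine Finset.mem_filter.2 ⟨hjT, ?_⟩
      intro hjL
      obtain ⟨t, ht⟩ := Submodule.mem_span_singleton.1 hjspan
      have htne : t ≠ 0 := by rintro rfl; simp at ht; exact hj0 ht.symm
      apply hiL
      have : β i = t⁻¹ • β j := by rw [← ht, smul_smul, inv_mul_cancel₀ htne, one_smul]
      rw [this]
      exact Submodule.smul_mem _ _ hjL

lemma sum_univ_zero {d : ℕ} {β : Fin d → V} (hqs : QuasiSymmetric β) :
    ∑ i, β i = 0 :=
  sum_closed_zero hqs _ Finset.univ rfl (by intro i _ j _ _; exact Finset.mem_univ j)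

lemma inner_halfSigma {d : ℕ} (β : Fin d → V) (δ lam : V) (a : Fin d → ℝ) :
    ⟪lam, δ + (2⁻¹ : ℝ) • ∑ i, a i • β i⟫
      = ⟪lam, δ⟫ + 2⁻¹ * ∑ i, a i * ⟪lam, β i⟫ := by
  simp [inner_add_right, real_inner_smul_right, inner_sum, mul_comm]

lemma minFace_rep {d : ℕ} (β : Fin d → V) (δ lam : V) (a : Fin d → ℝ)
    (ha : ∀ i, a i ∈ Set.Icc (0:ℝ) 1)
    (hmin : ∀ y ∈ halfSigma β δ,
      ⟪lam, δ + (2⁻¹ : ℝ) • ∑ i, a i • β i⟫ ≤ ⟪lam, y⟫) (i : Fin d) :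
    (0 < ⟪β i, lam⟫ → a i = 0) ∧ (⟪β i, lam⟫ < 0 → a i = 1) := by
  set c : Fin d → ℝ := fun j => ⟪lam, β j⟫ with hc
  set m : Fin d → ℝ := fun j => if c j < 0 then 1 else 0 with hm
  have hmIcc : ∀ j, m j ∈ Set.Icc (0:ℝ) 1 := by
    intro j; by_cases h : c j < 0 <;> simp [hm, h]
  have hy : δ + (2⁻¹ : ℝ) • ∑ j, m j • β j ∈ halfSigma β δ := ⟨m, hmIcc, rfl⟩
  have hkey : ∑ j, a j * c j ≤ ∑ j, m j * c j := by
    have := hmin _ hy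
    rw [inner_halfSigma, inner_halfSigma] at this
    have h2 : (2⁻¹ : ℝ) * ∑ j, a j * c j ≤ 2⁻¹ * ∑ j, m j * c j := by linarith
    linarith [(mul_le_mul_iff_right₀ (by norm_num : (0:ℝ) < 2⁻¹)).1 h2]
  have hterm : ∀ j ∈ Finset.univ, m j * c j ≤ a j * c j := by
    intro j _
    by_cases h : c j < 0
    · simp only [hm, if_pos h]
      rw [one_mul]
      nlinarith [(ha j).2, (ha j).1]
    · simp only [hm, if_neg h]
      rw [zero_mul]
      push_neg at h
      exact mul_nonneg (ha j).1 h
  have heq : ∀ j ∈ Finset.univ, m j * c j = a j * c j :=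
    (Finset.sum_eq_sum_iff_of_le hterm).1
      (le_antisymm (Finset.sum_le_sum hterm) hkey)
  have hi := heq i (Finset.mem_univ i)
  have hci : c i = ⟪β i, lam⟫ := real_inner_comm _ _
  constructor
  · intro hpos
    have h1 : ¬ c i < 0 := by rw [hci]; linarith
    rw [hm] at hi; simp only [if_neg h1, zero_mul] at hi
    have : c i ≠ 0 := by rw [hci]; linarith
    rcases mul_eq_zero.1 hi.symm with h | h
    · exact h
    · exact absurd h this
  · intro hneg
    have h1 : c i < 0 := by rw [hci]; linarith
    rw [hm] at hi; simp only [if_pos h1, one_mul] at hi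
    have h2 : (a i - 1) * c i = 0 := by linarith
    rcases mul_eq_zero.1 h2 with h | h
    · linarith
    · exact absurd h (ne_of_lt h1)

lemma dualPt_invol (c : V) : Function.Involutive (dualPt c) := by
  intro x; simp [dualPt]

lemma mem_dualFace {c x : V} {S : Set V} : x ∈ dualFace c S ↔ dualPt c x ∈ S := by
  constructor
  · rintro ⟨z, hz, rfl⟩; rwa [dualPt_invol]
  · intro h; exact ⟨dualPt c x, h, dualPt_invol c x⟩

lemma dualFace_dualFace (c : V) (S : Set V) : dualFace c (dualFace c S) = S := by
  ext x; rw [mem_dualFace, mem_dualFace, dualPt_invol]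

lemma vectorSpan_dualFace (c : V) (S : Set V) :
    vectorSpan ℝ (dualFace c S) = vectorSpan ℝ S := by
  unfold vectorSpan
  congr 1
  ext v
  constructor
  · rintro ⟨x, ⟨x', hx', rfl⟩, y, ⟨y', hy', rfl⟩, rfl⟩
    exact ⟨y', hy', x', hx', by simp [dualPt]⟩
  · rintro ⟨x, hx, y, hy, rfl⟩
    exact ⟨dualPt c y, ⟨y, hy, rfl⟩, dualPt c x, ⟨x, hx, rfl⟩, by simp [dualPt]⟩

lemma setCodim_dualFace (c : V) (S : Set V) : setCodim (dualFace c S) = setCodim S := by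
  unfold setCodim
  rw [direction_affineSpan, direction_affineSpan, vectorSpan_dualFace]

lemma halfSigma_symm {d : ℕ} {β : Fin d → V} (hsum : ∑ i, β i = 0) (δ : V) {x : V}
    (hx : x ∈ halfSigma β δ) : dualPt δ x ∈ halfSigma β δ := by
  obtain ⟨a, ha, rfl⟩ := hx
  refine ⟨fun i => 1 - a i, fun i => ?_, ?_⟩
  · have h := ha i
    simp only [Set.mem_Icc] at h ⊢
    constructor <;> [linarith [h.2]; linarith [h.1]]
  have : ∑ i, (1 - a i) • β i = ∑ i, β i - ∑ i, a i • β i := by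
    rw [← Finset.sum_sub_distrib]
    congr 1; ext i; rw [sub_smul, one_smul]
  rw [this, hsum, zero_sub, dualPt, smul_neg, two_smul]
  abel

lemma mem_minFace_dual {d : ℕ} {β : Fin d → V} (hsum : ∑ i, β i = 0) (δ lam x : V) :
    x ∈ minFace (halfSigma β δ) (-lam) ↔ dualPt δ x ∈ minFace (halfSigma β δ) lam := by
  have hP : ∀ z, z ∈ halfSigma β δ ↔ dualPt δ z ∈ halfSigma β δ := by
    intro z
    exact ⟨fun h => halfSigma_symm hsum δ h,
      fun h => by have := halfSigma_symm hsum δ h; rwa [dualPt_invol] at this⟩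
  constructor
  · rintro ⟨hxP, hxm⟩
    refine ⟨(hP x).1 hxP, fun y hy => ?_⟩
    have := hxm (dualPt δ y) ((hP y).1 hy)
    simp only [dualPt, inner_sub_right, inner_neg_left] at this ⊢
    linarith
  · rintro ⟨hxP, hxm⟩
    refine ⟨(hP x).2 hxP, fun y hy => ?_⟩
    have := hxm (dualPt δ y) ((hP y).1 hy)
    simp only [dualPt, inner_sub_right, inner_neg_left] at this ⊢
    linarith

lemma minFace_neg {d : ℕ} {β : Fin d → V} (hsum : ∑ i, β i = 0) (δ lam : V) :
    minFace (halfSigma β δ) (-lam) = dualFace δ (minFace (halfSigma β δ) lam) := by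
  ext x
  rw [mem_dualFace, mem_minFace_dual hsum]

lemma faceNormals_dual {d : ℕ} {β : Fin d → V} (hsum : ∑ i, β i = 0) (δ : V)
    (F : Set V) (lam : V) :
    lam ∈ faceNormals (halfSigma β δ) (dualFace δ F)
      ↔ -lam ∈ faceNormals (halfSigma β δ) F := by
  have hcod : ∀ mu : V, setCodim (minFace (halfSigma β δ) (-mu))
      = setCodim (minFace (halfSigma β δ) mu) := fun mu => by
    rw [minFace_neg hsum, setCodim_dualFace]
  constructor
  · rintro ⟨hn, hcd, hsub⟩
    refine ⟨by simpa using hn, ?_, ?_⟩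
    · rw [hcod lam]; exact hcd
    · intro z hz
      exact (mem_minFace_dual hsum δ lam z).2 (hsub ⟨z, hz, rfl⟩)
  · rintro ⟨hn, hcd, hsub⟩
    refine ⟨by simpa using hn, ?_, ?_⟩
    · rw [← hcod lam]; exact hcd
    · rintro z ⟨w, hw, rfl⟩
      exact (mem_minFace_dual hsum δ lam w).1 (hsub hw)


theorem statement5 {d : ℕ} (β : Fin d → V) (hqs : QuasiSymmetric β) (δ : V) (F : Set V)
    (hF : IsFaceOf (halfSigma β δ) F) :
    betaPlus β (halfSigma β δ) (dualFace δ F) = -betaPlus β (halfSigma β δ) F := by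
  obtain ⟨-, ⟨x0, hx0F⟩, -⟩ := hF
  have hsum : ∑ i, β i = 0 := sum_univ_zero hqs
  set P := halfSigma β δ with hPdef
  set p : Fin d → Prop := fun i => ∃ lam ∈ faceNormals P F, 0 < ⟪β i, lam⟫ with hp
  set q : Fin d → Prop := fun i => ∃ lam ∈ faceNormals P F, ⟪β i, lam⟫ < 0 with hq
  have hWd : WplusIdx β P (dualFace δ F) = Finset.univ.filter q := by
    ext i
    simp only [WplusIdx, Finset.mem_filter, Finset.mem_univ, true_and, hq]
    constructor
    · rintro ⟨lam, hlam, hpos⟩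
      refine ⟨-lam, (faceNormals_dual hsum δ F lam).1 hlam, ?_⟩
      rw [inner_neg_right]; linarith
    · rintro ⟨mu, hmu, hneg⟩
      refine ⟨-mu, ?_, ?_⟩
      · rw [faceNormals_dual hsum δ F, neg_neg]; exact hmu
      · rw [inner_neg_right]; linarith
  have hdisj : ∀ i, p i → ¬ q i := by
    rintro i ⟨lam, hlam, hpos⟩ ⟨mu, hmu, hneg⟩
    have hx0lam : x0 ∈ minFace P lam := hlam.2.2 hx0F
    have hx0mu : x0 ∈ minFace P mu := hmu.2.2 hx0F
    obtain ⟨a, ha, hx0eq⟩ := hx0lam.1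
    have hminlam : ∀ y ∈ halfSigma β δ,
        ⟪lam, δ + (2⁻¹ : ℝ) • ∑ j, a j • β j⟫ ≤ ⟪lam, y⟫ := by
      intro y hy; rw [← hx0eq]; exact hx0lam.2 y hy
    have hminmu : ∀ y ∈ halfSigma β δ,
        ⟪mu, δ + (2⁻¹ : ℝ) • ∑ j, a j • β j⟫ ≤ ⟪mu, y⟫ := by
      intro y hy; rw [← hx0eq]; exact hx0mu.2 y hy
    have h0 : a i = 0 := (minFace_rep β δ lam a ha hminlam i).1 hpos
    have h1 : a i = 1 := (minFace_rep β δ mu a ha hminmu i).2 hneg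
    rw [h0] at h1
    norm_num at h1
  have hq_of : Finset.filter (fun i => q i) (Finset.univ.filter (fun i => ¬ p i))
      = Finset.univ.filter q := by
    ext i
    simp only [Finset.mem_filter, Finset.mem_univ, true_and]
    exact ⟨fun h => h.2, fun h => ⟨fun hpi => hdisj i hpi h, h⟩⟩
  have hW0 : Finset.filter (fun i => ¬ q i) (Finset.univ.filter (fun i => ¬ p i))
      = Finset.univ.filter (fun i => ∀ lam ∈ faceNormals P F, ⟪β i, lam⟫ = 0) := by
    ext i
    simp only [Finset.mem_filter, Finset.mem_univ, true_and, hp, hq, not_exists]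
    constructor
    · rintro ⟨h1, h2⟩ lam hlam
      have h1' := h1 lam
      have h2' := h2 lam
      push_neg at h1' h2'
      exact le_antisymm (h1' hlam) (h2' hlam)
    · intro h
      constructor
      · intro lam hcon
        rcases hcon with ⟨hlam, hpos⟩
        rw [h lam hlam] at hpos
        exact lt_irrefl 0 hpos
      · intro lam hcon
        rcases hcon with ⟨hlam, hneg⟩
        rw [h lam hlam] at hneg
        exact lt_irrefl 0 hneg
  have hW0sum : ∑ i ∈ Finset.univ.filter
      (fun i => ∀ lam ∈ faceNormals P F, ⟪β i, lam⟫ = 0), β i = 0 := by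
    refine sum_closed_zero hqs _ _ rfl ?_
    intro i hi j hj0 hjspan
    obtain ⟨t, ht⟩ := Submodule.mem_span_singleton.1 hjspan
    refine Finset.mem_filter.2 ⟨Finset.mem_univ _, fun lam hlam => ?_⟩
    rw [← ht, real_inner_smul_left, (Finset.mem_filter.1 hi).2 lam hlam, mul_zero]
  have hsplit1 : ∑ i ∈ Finset.univ.filter p, β i
      + ∑ i ∈ Finset.univ.filter (fun i => ¬ p i), β i = 0 := by
    rw [Finset.sum_filter_add_sum_filter_not]
    exact hsum
  have hsplit2 : ∑ i ∈ Finset.univ.filter (fun i => ¬ p i), β i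
      = ∑ i ∈ Finset.univ.filter q, β i := by
    rw [← Finset.sum_filter_add_sum_filter_not (Finset.univ.filter (fun i => ¬ p i)) q β,
      hq_of, hW0, hW0sum, add_zero]
  have hWp : WplusIdx β P F = Finset.univ.filter p := rfl
  rw [betaPlus, betaPlus, hWd, hWp]
  rw [hsplit2] at hsplit1
  exact eq_neg_of_add_eq_zero_left (by rw [add_comm]; exact hsplit1)
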